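/- Let x, y ∈ F_{L,b} and G ⊆ L_≻ such that x and y are connected in G(F_{L,b}, G). If for every ≻-critical path (x′, z′, y′) in G(F_{L,b}, G) there exists a ≻-reduction path between x′ and y′, then there exists a ≻-reduction path between x and y in G(F_{L,b}, G). -/

import Mathlib

open scoped Classical

noncomputable section

variable {ι : Type*} [Fintype ι]

/-- `x ∈ ℕ^n`, i.e. all coordinates nonnegative. -/
def Nonneg (x : ι → ℤ) : Prop := ∀ i, 0 ≤ x i

/-- componentwise positive part `u⁺`. -/
def vposPart (x : ι → ℤ) : ι → ℤ := fun i => max (x i) 0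

/-- componentwise negative part `u⁻`. -/
def vnegPart (x : ι → ℤ) : ι → ℤ := fun i => max (-x i) 0

/-- support of a vector. -/
def suppV (x : ι → ℤ) : Set ι := {i | x i ≠ 0}

/-- membership in the fiber `F_{L,b} = {x ∈ ℕ^n : x ≡ b (mod L)}`. -/
def inFiber (L : AddSubgroup (ι → ℤ)) (b x : ι → ℤ) : Prop :=
  Nonneg x ∧ x - b ∈ L

/-- adjacency in the fiber graph: `x` and `y` differ by an element of `±S`. -/
def adjS (S : Set (ι → ℤ)) (x y : ι → ℤ) : Prop := x - y ∈ S ∨ y - x ∈ S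

/-- `p 0, p 1, …, p k` is a path in the fiber graph `G(F_{L,b}, S)`. -/
def IsPathIn (L : AddSubgroup (ι → ℤ)) (S : Set (ι → ℤ)) (b : ι → ℤ)
    (k : ℕ) (p : ℕ → ι → ℤ) : Prop :=
  (∀ i ≤ k, inFiber L b (p i)) ∧ ∀ i < k, adjS S (p i) (p (i+1))

/-- `x` and `y` are connected in the fiber graph `G(F_{L,b}, S)`. -/
def ConnIn (L : AddSubgroup (ι → ℤ)) (S : Set (ι → ℤ)) (b x y : ι → ℤ) : Prop :=
  ∃ k p, IsPathIn L S b k p ∧ p 0 = x ∧ p k = y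

/-- `S` is a generating set of the lattice `L`: all fiber graphs are connected. -/
def IsGenSet (L : AddSubgroup (ι → ℤ)) (S : Set (ι → ℤ)) : Prop :=
  ∀ b x y, inFiber L b x → inFiber L b y → ConnIn L S b x y

/-- `succ` (written `≻`) is a term ordering for `L`: an additive total
well-ordering on every fiber. -/
structure IsTermOrder (L : AddSubgroup (ι → ℤ))
    (succ : (ι → ℤ) → (ι → ℤ) → Prop) : Prop where
  trans : ∀ {x y z}, succ x y → succ y z → succ x z
  irrefl : ∀ x, ¬ succ x x
  total : ∀ b x y, inFiber L b x → inFiber L b y → x ≠ y → succ x y ∨ succ y x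
  additive : ∀ x y γ, Nonneg γ → succ x y → succ (x + γ) (y + γ)
  wf : ∀ b, WellFounded (fun x y : ι → ℤ => inFiber L b x ∧ inFiber L b y ∧ succ y x)

/-- `L_≻ = {u ∈ L : u⁺ ≻ u⁻}`. -/
def Lpos (L : AddSubgroup (ι → ℤ)) (succ : (ι → ℤ) → (ι → ℤ) → Prop) :
    Set (ι → ℤ) :=
  {u | u ∈ L ∧ succ (vposPart u) (vnegPart u)}

/-- `m` is the `≻`-minimal element of the fiber `F_{L,b}`. -/
def IsMinimalFiber (L : AddSubgroup (ι → ℤ)) (b : ι → ℤ)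
    (succ : (ι → ℤ) → (ι → ℤ) → Prop) (m : ι → ℤ) : Prop :=
  inFiber L b m ∧ ∀ y, inFiber L b y → y ≠ m → succ y m

/-- `G` is a `≻`-Gröbner basis of `L`: from every `x ∈ ℕ^n` there is a
`≻`-decreasing path in `G(F_{L,x},G)` to the `≻`-minimal element of `F_{L,x}`. -/
def IsGroebner (L : AddSubgroup (ι → ℤ)) (succ : (ι → ℤ) → (ι → ℤ) → Prop)
    (G : Set (ι → ℤ)) : Prop :=
  ∀ x, Nonneg x → ∃ m, IsMinimalFiber L x succ m ∧
    ∃ k p, IsPathIn L G x k p ∧ p 0 = x ∧ p k = m ∧ ∀ i < k, succ (p i) (p (i+1))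

/-- there is a `≻`-reduction path from `x` to `y` in `G(F_{L,b},G)`:
no intermediate node is `≻` than both endpoints. -/
def IsRedPath (L : AddSubgroup (ι → ℤ)) (G : Set (ι → ℤ)) (b : ι → ℤ)
    (succ : (ι → ℤ) → (ι → ℤ) → Prop) (x y : ι → ℤ) : Prop :=
  ∃ k p, IsPathIn L G b k p ∧ p 0 = x ∧ p k = y ∧
    ∀ i, 0 < i → i < k → ¬ (succ (p i) x ∧ succ (p i) y)

/-- `(x,z,y)` is a `≻`-critical path in `G(F_{L,b},G)`. -/
def IsCriticalIn (L : AddSubgroup (ι → ℤ)) (G : Set (ι → ℤ)) (b : ι → ℤ)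
    (succ : (ι → ℤ) → (ι → ℤ) → Prop) (x z y : ι → ℤ) : Prop :=
  inFiber L b x ∧ inFiber L b z ∧ inFiber L b y ∧
  adjS G x z ∧ adjS G z y ∧ succ z x ∧ succ z y

/-- `z^(u,v) := max{u⁺, v⁺}` componentwise. -/
def zOf (u v : ι → ℤ) : ι → ℤ := fun i => max (vposPart u i) (vposPart v i)

/-- `x^(u,v) := z^(u,v) − u`. -/
def xOf (u v : ι → ℤ) : ι → ℤ := zOf u v - u

/-- `y^(u,v) := z^(u,v) − v`. -/
def yOf (u v : ι → ℤ) : ι → ℤ := zOf u v - v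

/-- `(x,z,y)` is a `≻`-critical path for the pair `(u,v)`. -/
def IsCriticalFor (succ : (ι → ℤ) → (ι → ℤ) → Prop) (u v x z y : ι → ℤ) : Prop :=
  Nonneg x ∧ Nonneg z ∧ Nonneg y ∧ z - x = u ∧ z - y = v ∧ succ z x ∧ succ z y

/-- rational inner product `φ·x`. -/
def qdot (φ : ι → ℚ) (x : ι → ℤ) : ℚ := ∑ i, φ i * (x i : ℚ)

/-- there is a `φ`-reduction path from `x` to `y` in `G(F_{L,b},G)`. -/
def IsPhiRedPath (L : AddSubgroup (ι → ℤ)) (G : Set (ι → ℤ)) (b : ι → ℤ)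
    (φ : ι → ℚ) (x y : ι → ℤ) : Prop :=
  ∃ k p, IsPathIn L G b k p ∧ p 0 = x ∧ p k = y ∧
    ∀ i, 0 < i → i < k → ¬ (qdot φ x < qdot φ (p i) ∧ qdot φ y < qdot φ (p i))

/-- `G` is a `φ`-Gröbner basis of `L`. -/
def IsPhiGroebner (L : AddSubgroup (ι → ℤ)) (φ : ι → ℚ) (G : Set (ι → ℤ)) : Prop :=
  ∀ b x y, inFiber L b x → inFiber L b y → IsPhiRedPath L G b φ x y

/-- `x ∧_σ y`: componentwise min on `σ`, zero elsewhere. -/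
def meetOn (σ : Set ι) (x y : ι → ℤ) : ι → ℤ :=
  fun i => if i ∈ σ then min (x i) (y i) else 0

/-- `T` is `σ`-saturated on `S`. -/
def IsSaturatedOn (L : AddSubgroup (ι → ℤ)) (σ : Set ι) (S T : Set (ι → ℤ)) : Prop :=
  ∀ b x y, inFiber L b x → inFiber L b y → ConnIn L S b x y →
    ConnIn L T (b - meetOn σ x y) (x - meetOn σ x y) (y - meetOn σ x y)

/-- membership in `F^σ_{L,b}`: nonnegative outside `σ`. -/
def inFiberFree (L : AddSubgroup (ι → ℤ)) (σ : Set ι) (b x : ι → ℤ) : Prop :=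
  (∀ i, i ∉ σ → 0 ≤ x i) ∧ x - b ∈ L

/-- path in the graph `G(F^σ_{L,b}, S)`. -/
def IsPathFree (L : AddSubgroup (ι → ℤ)) (σ : Set ι) (S : Set (ι → ℤ)) (b : ι → ℤ)
    (k : ℕ) (p : ℕ → ι → ℤ) : Prop :=
  (∀ i ≤ k, inFiberFree L σ b (p i)) ∧ ∀ i < k, adjS S (p i) (p (i+1))

/-- connectivity in `G(F^σ_{L,b}, S)`. -/
def ConnFree (L : AddSubgroup (ι → ℤ)) (σ : Set ι) (S : Set (ι → ℤ))
    (b x y : ι → ℤ) : Prop :=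
  ∃ k p, IsPathFree L σ S b k p ∧ p 0 = x ∧ p k = y

/-- `S` is a `σ`-generating set of `L`. -/
def IsGenSetFree (L : AddSubgroup (ι → ℤ)) (σ : Set ι) (S : Set (ι → ℤ)) : Prop :=
  ∀ b x y, inFiberFree L σ b x → inFiberFree L σ b y → ConnFree L σ S b x y

/-- there is a `z`-bounded path from `x` to `y` in `G(F_{L,b},G)`:
all nodes are `≺ z`. -/
def IsBoundedPath (L : AddSubgroup (ι → ℤ)) (G : Set (ι → ℤ)) (b : ι → ℤ)
    (succ : (ι → ℤ) → (ι → ℤ) → Prop) (z x y : ι → ℤ) : Prop :=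
  ∃ k p, IsPathIn L G b k p ∧ p 0 = x ∧ p k = y ∧ ∀ i ≤ k, succ z (p i)

/-- `ē^i = −e^i` as a rational vector. -/
def ebar [DecidableEq ι] (i : ι) : ι → ℚ := fun j => if j = i then -1 else 0

/-- projection deleting the `i`-th coordinate. -/
def projCoord {n : ℕ} (i : Fin (n+1)) : (Fin (n+1) → ℤ) →+ (Fin n → ℤ) where
  toFun x := fun j => x (i.succAbove j)
  map_zero' := rfl
  map_add' _ _ := rfl

/-- projection onto the coordinates outside `σ`. -/
def projSet {n : ℕ} (σ : Finset (Fin n)) :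
    (Fin n → ℤ) →+ ({ i : Fin n // i ∉ σ } → ℤ) where
  toFun x := fun j => x j.1
  map_zero' := rfl
  map_add' _ _ := rfl

end

section CritAux

variable {n : ℕ} {L : AddSubgroup (Fin n → ℤ)} {succ : (Fin n → ℤ) → (Fin n → ℤ) → Prop}
  {G : Set (Fin n → ℤ)} {b : Fin n → ℤ}

open List

lemma aux_adj_ne (hto : IsTermOrder L succ) (hG : G ⊆ Lpos L succ)
    {p q : Fin n → ℤ} (h : adjS G p q) : p ≠ q := by
  rintro rfl
  have h0 : (0 : Fin n → ℤ) ∈ G := by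
    rcases h with h | h <;> simpa using h
  have h1 := (hG h0).2
  have h2 : vposPart (0 : Fin n → ℤ) = vnegPart (0 : Fin n → ℤ) := by
    funext i; simp [vposPart, vnegPart]
  rw [h2] at h1
  exact hto.irrefl _ h1

/-- a nonempty list of fiber elements has a `≻`-maximal element. -/
lemma aux_exists_max (hto : IsTermOrder L succ) :
    ∀ (l : List (Fin n → ℤ)), l ≠ [] → (∀ q ∈ l, inFiber L b q) →
      ∃ m ∈ l, ∀ q ∈ l, q = m ∨ succ m q := by
  intro l
  induction l with
  | nil => simp
  | cons a t ih =>
    intro _ hf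
    rcases eq_or_ne t [] with rfl | ht
    · exact ⟨a, by simp, by simp⟩
    · obtain ⟨m, hm, hmax⟩ := ih ht (fun q hq => hf q (mem_cons_of_mem _ hq))
      by_cases ham : a = m
      · refine ⟨m, mem_cons_of_mem _ hm, ?_⟩
        intro q hq
        rcases mem_cons.1 hq with rfl | hq
        · exact Or.inl ham
        · exact hmax q hq
      · rcases hto.total b a m (hf a mem_cons_self) (hf m (mem_cons_of_mem _ hm)) ham
          with h | h
        · refine ⟨a, mem_cons_self, ?_⟩
          intro q hq
          rcases mem_cons.1 hq with rfl | hq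
          · exact Or.inl rfl
          · rcases hmax q hq with rfl | h2
            · exact Or.inr h
            · exact Or.inr (hto.trans h h2)
        · refine ⟨m, mem_cons_of_mem _ hm, ?_⟩
          intro q hq
          rcases mem_cons.1 hq with rfl | hq
          · exact Or.inr h
          · exact hmax q hq

/-- a good list: nonempty path list in the fiber graph. -/
def GoodList (L : AddSubgroup (Fin n → ℤ)) (G : Set (Fin n → ℤ)) (b : Fin n → ℤ)
    (l : List (Fin n → ℤ)) : Prop :=
  l ≠ [] ∧ l.Chain' (adjS G) ∧ ∀ q ∈ l, inFiber L b q

lemma aux_path_to_list {k : ℕ} {p : ℕ → Fin n → ℤ} (h : IsPathIn L G b k p) :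
    GoodList L G b ((List.range (k+1)).map p) ∧
      ((List.range (k+1)).map p).head? = some (p 0) ∧
      ((List.range (k+1)).map p).getLast? = some (p k) := by
  obtain ⟨hfib, hadj⟩ := h
  refine ⟨⟨by simp, ?_, ?_⟩, ?_, ?_⟩
  · unfold List.Chain'; rw [List.isChain_map, List.isChain_range_succ]
    intro m hm
    exact hadj m hm
  · intro q hq
    obtain ⟨i, hi, rfl⟩ := List.mem_map.1 hq
    exact hfib i (Nat.lt_succ_iff.mp (List.mem_range.1 hi))
  · rw [List.range_succ_eq_map]
    simp
  · rw [List.range_succ, List.map_append]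
    simp

lemma aux_list_to_red {l : List (Fin n → ℤ)} {x' y' : Fin n → ℤ}
    (hgood : GoodList L G b l) (hh : l.head? = some x') (hlast : l.getLast? = some y')
    (hint : ∀ i, 0 < i → i < l.length - 1 →
      ¬ (succ (l.getD i 0) x' ∧ succ (l.getD i 0) y')) :
    IsRedPath L G b succ x' y' := by
  obtain ⟨hne, hchain, hfib⟩ := hgood
  have hlen : 0 < l.length := List.length_pos_iff.2 hne
  refine ⟨l.length - 1, fun i => l.getD i 0, ⟨?_, ?_⟩, ?_, ?_, hint⟩
  · intro i hi
    have hi' : i < l.length := by omega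
    show inFiber L b (l.getD i 0)
    rw [List.getD_eq_getElem _ _ hi']
    exact hfib _ (List.getElem_mem _)
  · intro i hi
    have h := List.isChain_iff_getElem.1 hchain i (by omega)
    have h1 : i < l.length := by omega
    have h2 : i + 1 < l.length := by omega
    show adjS G (l.getD i 0) (l.getD (i+1) 0)
    rw [List.getD_eq_getElem _ _ h1, List.getD_eq_getElem _ _ h2]
    simpa [List.get_eq_getElem] using h
  · show l.getD 0 0 = x'
    rw [List.getD_eq_getElem _ _ hlen]
    rw [List.head?_eq_head hne] at hh
    rw [← Option.some_inj.1 hh]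
    exact (List.getElem_zero hlen).symm ▸ rfl
  · show l.getD (l.length - 1) 0 = y'
    have hlast' : l.getLast hne = y' := by
      rw [List.getLast?_eq_getLast_of_ne_nil hne] at hlast
      exact Option.some_inj.1 hlast
    have h1 : l.length - 1 < l.length := by omega
    rw [List.getD_eq_getElem _ _ h1, ← hlast', List.getLast_eq_getElem]

lemma aux_chain'_splice {α : Type*} {R : α → α → Prop} {u v w : List α} {a m c : α}
    (h : List.Chain' R (u ++ a :: m :: c :: v)) (hw : List.Chain' R w)
    (hwh : w.head? = some a) (hwl : w.getLast? = some c) :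
    List.Chain' R (u ++ w ++ v) := by
  rw [List.append_assoc]
  unfold List.Chain' at h hw ⊢; rw [List.isChain_append] at h ⊢
  obtain ⟨hu, hmid, hlink⟩ := h
  rw [List.isChain_cons_cons, List.isChain_cons_cons, List.isChain_cons] at hmid
  refine ⟨hu, ?_, ?_⟩
  · rw [List.isChain_append]
    refine ⟨hw, hmid.2.2.2, ?_⟩
    intro x hx y hy
    rw [hwl] at hx
    simp only [Option.mem_def, Option.some_inj] at hx
    subst hx
    exact hmid.2.2.1 y hy
  · intro x hx y hy
    rw [List.head?_append, hwh] at hy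
    have hya : y = a := by
      simp only [Option.mem_def, Option.some_or, Option.some_inj] at hy
      exact hy.symm
    exact hya ▸ hlink x hx a (by simp)

/-- one step: either the list is already a reduction path, or it can be improved. -/
lemma aux_step (hto : IsTermOrder L succ) (hG : G ⊆ Lpos L succ)
    (hcrit : ∀ x' z' y', IsCriticalIn L G b succ x' z' y' → IsRedPath L G b succ x' y')
    {l : List (Fin n → ℤ)} {x' y' : Fin n → ℤ}
    (hgood : GoodList L G b l) (hh : l.head? = some x') (hlast : l.getLast? = some y') :
    IsRedPath L G b succ x' y' ∨
    ∃ m₀ l', m₀ ∈ l ∧ (∀ q ∈ l, q = m₀ ∨ succ m₀ q) ∧ GoodList L G b l' ∧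
      l'.head? = some x' ∧ l'.getLast? = some y' ∧
      (∀ q ∈ l', q = m₀ ∨ succ m₀ q) ∧ l'.count m₀ < l.count m₀ := by
  classical
  obtain ⟨hne, hchain, hfib⟩ := hgood
  by_cases hred : ∀ i, 0 < i → i < l.length - 1 →
      ¬ (succ (l.getD i 0) x' ∧ succ (l.getD i 0) y')
  · exact Or.inl (aux_list_to_red ⟨hne, hchain, hfib⟩ hh hlast hred)
  right
  push_neg at hred
  obtain ⟨i, hi0, hik, hbadx, hbady⟩ := hred
  obtain ⟨m₀, hm₀mem, hmax⟩ := aux_exists_max hto l hne hfib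
  have hilen : i < l.length := by omega
  have hgi_mem : l.getD i 0 ∈ l := by
    rw [List.getD_eq_getElem _ _ hilen]; exact List.getElem_mem _
  have hms : succ m₀ x' := by
    rcases hmax _ hgi_mem with h | h
    · exact h ▸ hbadx
    · exact hto.trans h hbadx
  have hmy : succ m₀ y' := by
    rcases hmax _ hgi_mem with h | h
    · exact h ▸ hbady
    · exact hto.trans h hbady
  have hm₀x : m₀ ≠ x' := fun h => hto.irrefl _ (h ▸ hms)
  have hm₀y : m₀ ≠ y' := fun h => hto.irrefl _ (h ▸ hmy)
  obtain ⟨u, v, huv⟩ := List.append_of_mem hm₀mem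
  have hu : u ≠ [] := by
    rintro rfl
    rw [huv] at hh
    simp only [List.nil_append, List.head?_cons, Option.some_inj] at hh
    exact hm₀x hh
  have hv : v ≠ [] := by
    rintro rfl
    rw [huv] at hlast
    rw [List.getLast?_concat] at hlast
    exact hm₀y (Option.some_inj.1 hlast)
  obtain ⟨u', a, hu2⟩ : ∃ u' a, u = u' ++ [a] :=
    ⟨u.dropLast, u.getLast hu, (List.dropLast_append_getLast hu).symm⟩
  obtain ⟨cN, v', hv2⟩ : ∃ c v', v = c :: v' :=
    ⟨v.head hv, v.tail, (List.cons_head_tail hv).symm⟩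
  have hl : l = u' ++ a :: m₀ :: cN :: v' := by
    rw [huv, hu2, hv2]; simp
  have hchain' : List.Chain' (adjS G) (u' ++ a :: m₀ :: cN :: v') := hl ▸ hchain
  have hc2 : List.Chain' (adjS G) (a :: m₀ :: cN :: v') := (List.isChain_append.1 hchain').2.1
  unfold List.Chain' at hc2; rw [List.isChain_cons_cons] at hc2
  have hadj1 : adjS G a m₀ := hc2.1
  have hc3 := hc2.2
  rw [List.isChain_cons_cons] at hc3
  have hadj2 : adjS G m₀ cN := hc3.1
  have hane : a ≠ m₀ := aux_adj_ne hto hG hadj1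
  have hcne : cN ≠ m₀ := fun h => aux_adj_ne hto hG hadj2 h.symm
  have ha_mem : a ∈ l := by rw [hl]; simp
  have hc_mem : cN ∈ l := by rw [hl]; simp
  have hsa : succ m₀ a := ((hmax a ha_mem).resolve_left hane)
  have hsc : succ m₀ cN := ((hmax cN hc_mem).resolve_left hcne)
  have hcritp : IsCriticalIn L G b succ a m₀ cN :=
    ⟨hfib a ha_mem, hfib m₀ hm₀mem, hfib cN hc_mem, hadj1, hadj2, hsa, hsc⟩
  obtain ⟨kr, pr, hpr, hpr0, hprk, hprint⟩ := hcrit a m₀ cN hcritp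
  obtain ⟨⟨hwne, hwchain, hwfib⟩, hwh, hwl⟩ := aux_path_to_list (L := L) (G := G) (b := b) hpr
  set w := (List.range (kr+1)).map pr with hw_def
  rw [hpr0] at hwh
  rw [hprk] at hwl
  have hwlt : ∀ q ∈ w, succ m₀ q := by
    intro q hq
    rw [hw_def] at hq
    obtain ⟨j, hj, rfl⟩ := List.mem_map.1 hq
    have hjk : j < kr + 1 := List.mem_range.1 hj
    rcases Nat.eq_zero_or_pos j with rfl | hj0
    · exact hpr0 ▸ hsa
    rcases eq_or_ne j kr with rfl | hjkr
    · exact hprk ▸ hsc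
    have hjlt : j < kr := by omega
    have hfq : inFiber L b (pr j) := hpr.1 j (by omega)
    rcases not_and_or.1 (hprint j hj0 hjlt) with hna | hnc
    · by_cases hqa : pr j = a
      · exact hqa ▸ hsa
      · rcases hto.total b (pr j) a hfq (hfib a ha_mem) hqa with h | h
        · exact absurd h hna
        · exact hto.trans hsa h
    · by_cases hqc : pr j = cN
      · exact hqc ▸ hsc
      · rcases hto.total b (pr j) cN hfq (hfib cN hc_mem) hqc with h | h
        · exact absurd h hnc
        · exact hto.trans hsc h
  refine ⟨m₀, u' ++ w ++ v', hm₀mem, hmax, ⟨?_, ?_, ?_⟩, ?_, ?_, ?_, ?_⟩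
  · simp [hwne]
  · exact aux_chain'_splice hchain' hwchain hwh hwl
  · intro q hq
    simp only [List.append_assoc, List.mem_append] at hq
    rcases hq with hq | hq | hq
    · exact hfib q (by rw [hl]; simp [hq])
    · exact hwfib q hq
    · exact hfib q (by rw [hl]; simp [hq])
  · rw [hl] at hh
    rw [List.append_assoc, List.head?_append, List.head?_append, hwh]
    rw [List.head?_append] at hh
    simpa using hh
  · rw [hl] at hlast
    rcases v' with _ | ⟨q, v''⟩
    · simpa [List.getLast?_append, hwl] using hlast
    · simpa [List.getLast?_append] using hlast
  · intro q hq
    simp only [List.append_assoc, List.mem_append] at hq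
    rcases hq with hq | hq | hq
    · exact hmax q (by rw [hl]; simp [hq])
    · exact Or.inr (hwlt q hq)
    · exact hmax q (by rw [hl]; simp [hq])
  · have hwcount : w.count m₀ = 0 := by
      rw [List.count_eq_zero]
      intro hmem
      exact hto.irrefl _ (hwlt _ hmem)
    rw [hl]
    simp only [List.count_append, List.count_cons, hwcount]
    simp [hane, hcne]
/-- the engine: well-founded induction on the maximal node, then on its count. -/
lemma aux_engine (hto : IsTermOrder L succ) (hG : G ⊆ Lpos L succ)
    (hcrit : ∀ x' z' y', IsCriticalIn L G b succ x' z' y' → IsRedPath L G b succ x' y')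
    (m : Fin n → ℤ) :
    inFiber L b m → ∀ (c : ℕ) (l : List (Fin n → ℤ)) (x' y' : Fin n → ℤ),
      GoodList L G b l → l.head? = some x' → l.getLast? = some y' →
      (∀ q ∈ l, q = m ∨ succ m q) → l.count m ≤ c →
      IsRedPath L G b succ x' y' := by
  classical
  refine (hto.wf b).induction
    (C := fun m => inFiber L b m → ∀ (c : ℕ) (l : List (Fin n → ℤ)) (x' y' : Fin n → ℤ),
      GoodList L G b l → l.head? = some x' → l.getLast? = some y' →
      (∀ q ∈ l, q = m ∨ succ m q) → l.count m ≤ c →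
      IsRedPath L G b succ x' y') m ?_
  intro m IH hm c
  induction c with
  | zero =>
    intro l x' y' hgood hh hlast hbound hcount
    rcases aux_step hto hG hcrit hgood hh hlast with hdone | ⟨m₀, l', hm₀mem, _, hgood', hh', hlast', hbound', hcountlt⟩
    · exact hdone
    rcases hbound m₀ hm₀mem with rfl | hlt
    · omega
    · exact IH m₀ ⟨hgood.2.2 m₀ hm₀mem, hm, hlt⟩ (hgood.2.2 m₀ hm₀mem)
        (l'.count m₀) l' x' y' hgood' hh' hlast' hbound' le_rfl
  | succ c ihc =>
    intro l x' y' hgood hh hlast hbound hcount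
    rcases aux_step hto hG hcrit hgood hh hlast with hdone | ⟨m₀, l', hm₀mem, _, hgood', hh', hlast', hbound', hcountlt⟩
    · exact hdone
    rcases hbound m₀ hm₀mem with rfl | hlt
    · exact ihc l' x' y' hgood' hh' hlast' hbound' (by omega)
    · exact IH m₀ ⟨hgood.2.2 m₀ hm₀mem, hm, hlt⟩ (hgood.2.2 m₀ hm₀mem)
        (l'.count m₀) l' x' y' hgood' hh' hlast' hbound' le_rfl

end CritAux

/-- if `x` and `y` are connected in `G(F_{L,b},G)` and every
`≻`-critical path in `G(F_{L,b},G)` admits a `≻`-reduction path between its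
endpoints, then there is a `≻`-reduction path between `x` and `y`. -/
theorem stmt2 {n : ℕ} (L : AddSubgroup (Fin n → ℤ))
    (hL : ∀ u ∈ L, Nonneg u → u = 0)
    (succ : (Fin n → ℤ) → (Fin n → ℤ) → Prop) (hto : IsTermOrder L succ)
    (G : Set (Fin n → ℤ)) (hG : G ⊆ Lpos L succ)
    (b x y : Fin n → ℤ) (hx : inFiber L b x) (hy : inFiber L b y)
    (hconn : ConnIn L G b x y)
    (hcrit : ∀ x' z' y', IsCriticalIn L G b succ x' z' y' →
      IsRedPath L G b succ x' y') :
    IsRedPath L G b succ x y := by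
  classical
  obtain ⟨k, p, hp, hp0, hpk⟩ := hconn
  obtain ⟨hgood, hh, hl⟩ := aux_path_to_list (L := L) (G := G) (b := b) hp
  obtain ⟨m, hm, hmax⟩ := aux_exists_max hto _ hgood.1 hgood.2.2
  exact aux_engine hto hG hcrit m (hgood.2.2 m hm) (((List.range (k+1)).map p).count m)
    _ x y hgood (hp0 ▸ hh) (hpk ▸ hl) hmax le_rfl
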